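/- Let p be an odd prime and H_p the Heisenberg group of order p^3 over ZMod p. Let σ be a group automorphism of H_p fixing the center pointwise. Then no complex irreducible representation ρ of H_p of dimension p satisfies ρ^∨ ≅ ρ ∘ σ, where ρ^∨ is the dual (contragredient) representation. -/

import Mathlib

open Matrix

/-- The matrix [[1,a,c],[0,1,b],[0,0,1]]. -/
def heisMat (p : ℕ) (a b c : ZMod p) : Matrix (Fin 3) (Fin 3) (ZMod p) :=
  !![1, a, c; 0, 1, b; 0, 0, 1]

/-- The Heisenberg group mod `p`, as a subgroup of `GL₃(ZMod p)`. -/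
def Heis (p : ℕ) : Subgroup (GL (Fin 3) (ZMod p)) where
  carrier := {g | ∃ a b c : ZMod p,
    (g : Matrix (Fin 3) (Fin 3) (ZMod p)) = heisMat p a b c}
  one_mem' := ⟨0, 0, 0, by simp [heisMat, Matrix.one_fin_three]⟩
  mul_mem' := by
    rintro x y ⟨a, b, c, hx⟩ ⟨a', b', c', hy⟩
    refine ⟨a + a', b + b', c + c' + a * b', ?_⟩
    rw [Units.val_mul, hx, hy]
    ext i j
    fin_cases i <;> fin_cases j <;>
      simp [heisMat, Matrix.mul_apply, Fin.sum_univ_three, Matrix.vecHead, Matrix.vecTail] <;> ring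
  inv_mem' := by
    rintro x ⟨a, b, c, hx⟩
    refine ⟨-a, -b, a * b - c, ?_⟩
    have h1 : (x : Matrix (Fin 3) (Fin 3) (ZMod p)) * heisMat p (-a) (-b) (a * b - c) = 1 := by
      rw [hx]
      ext i j
      fin_cases i <;> fin_cases j <;>
        simp [heisMat, Matrix.mul_apply, Fin.sum_univ_three, Matrix.one_apply, Matrix.vecHead, Matrix.vecTail] <;> ring
    calc ((x⁻¹ : GL (Fin 3) (ZMod p)) : Matrix (Fin 3) (Fin 3) (ZMod p))
        = ↑x⁻¹ * 1 := by rw [mul_one]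
      _ = ↑x⁻¹ * (↑x * heisMat p (-a) (-b) (a * b - c)) := by rw [h1]
      _ = (↑x⁻¹ * ↑x) * heisMat p (-a) (-b) (a * b - c) := by rw [mul_assoc]
      _ = heisMat p (-a) (-b) (a * b - c) := by rw [Units.inv_mul, one_mul]



lemma heisMat_mul (p : ℕ) (a b c a' b' c' : ZMod p) :
    heisMat p a b c * heisMat p a' b' c' = heisMat p (a+a') (b+b') (c+c'+a*b') := by
  ext i j
  fin_cases i <;> fin_cases j <;>
    simp [heisMat, Matrix.mul_apply, Fin.sum_univ_three, Matrix.vecHead, Matrix.vecTail] <;> ring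

def heisUnit (p : ℕ) (a b c : ZMod p) : GL (Fin 3) (ZMod p) :=
  ⟨heisMat p a b c, heisMat p (-a) (-b) (a*b-c),
   by rw [heisMat_mul]; ext i j; fin_cases i <;> fin_cases j <;> simp [heisMat, Matrix.one_apply, Matrix.vecHead, Matrix.vecTail],
   by rw [heisMat_mul]; ext i j; fin_cases i <;> fin_cases j <;> simp [heisMat, Matrix.one_apply, Matrix.vecHead, Matrix.vecTail]⟩

def heisElt (p : ℕ) (a b c : ZMod p) : ↥(Heis p) :=
  ⟨heisUnit p a b c, ⟨a, b, c, rfl⟩⟩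

lemma heisElt_mul (p : ℕ) (a b c a' b' c' : ZMod p) :
    heisElt p a b c * heisElt p a' b' c' = heisElt p (a+a') (b+b') (c+c'+a*b') := by
  apply Subtype.ext; apply Units.ext
  show (heisUnit p a b c).val * (heisUnit p a' b' c').val = _
  exact heisMat_mul p a b c a' b' c'

lemma heisElt_one (p : ℕ) : heisElt p 0 0 0 = 1 := by
  apply Subtype.ext; apply Units.ext
  show heisMat p 0 0 0 = 1
  ext i j
  fin_cases i <;> fin_cases j <;> simp [heisMat, Matrix.one_apply, Matrix.vecHead, Matrix.vecTail]

lemma heis_exists (p : ℕ) (x : ↥(Heis p)) : ∃ a b c, x = heisElt p a b c := by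
  obtain ⟨a, b, c, h⟩ := x.2
  exact ⟨a, b, c, Subtype.ext (Units.ext h)⟩

lemma heisElt_central (p : ℕ) (t : ZMod p) : heisElt p 0 0 t ∈ Subgroup.center ↥(Heis p) := by
  rw [Subgroup.mem_center_iff]
  intro g
  obtain ⟨a, b, c, rfl⟩ := heis_exists p g
  rw [heisElt_mul, heisElt_mul]
  ring_nf

lemma heisElt_pow (p : ℕ) (t : ZMod p) (n : ℕ) : (heisElt p 0 0 t)^n = heisElt p 0 0 (n * t) := by
  induction n with
  | zero => simpa using (heisElt_one p).symm
  | succ n ih => rw [pow_succ, ih, heisElt_mul]; push_cast; ring_nf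

lemma heis_comm (p : ℕ) (x y : ↥(Heis p)) :
    ∃ t : ZMod p, x * y = heisElt p 0 0 t * (y * x) := by
  obtain ⟨a, b, c, rfl⟩ := heis_exists p x
  obtain ⟨a', b', c', rfl⟩ := heis_exists p y
  refine ⟨a*b' - a'*b, ?_⟩
  rw [heisElt_mul, heisElt_mul, heisElt_mul]
  ring_nf

open CategoryTheory in
/-- Schur: a linear endomorphism commuting with the action on a simple `FDRep` is scalar. -/
lemma scalar_of_commute {k G : Type} [Field k] [IsAlgClosed k] [Monoid G]
    (ρ : FDRep k G) [Simple ρ] (f : ρ →ₗ[k] ρ)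
    (hf : ∀ g : G, ρ.ρ g ∘ₗ f = f ∘ₗ ρ.ρ g) :
    ∃ c : k, f = c • LinearMap.id := by
  let F : ρ ⟶ ρ := ⟨ConcreteCategory.ofHom f, fun g => by ext v; exact congrArg (fun m => m v) (hf g).symm⟩
  obtain ⟨c, hc⟩ := endomorphism_simple_eq_smul_id k F
  refine ⟨c, ?_⟩
  have := congrArg Action.Hom.hom hc
  ext v
  have := congrArg (fun m => m v) this
  simp [F] at this; rw [← this]; rfl

lemma smul_cancel_of_ne_zero {V : Type} [AddCommGroup V] [Module ℂ V]
    {a b : ℂ} {v : V} (hv : v ≠ 0) (h : a • v = b • v) : a = b := by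
  by_contra hne
  have h2 : (a - b) • v = 0 := by rw [sub_smul, h, sub_self]
  rcases smul_eq_zero.mp h2 with h3 | h3
  · exact hne (by linear_combination h3)
  · exact hv h3

open CategoryTheory in
/-- The central character value is fixed under `c ↦ c⁻¹` given an iso `ρ^∨ ≅ ρ ∘ σ`. -/
lemma central_inv_eq {G : Type} [Group G] (ρ : FDRep ℂ G) (σ : G ≃* G)
    (w : G) (hw : σ w = w) (c : ℂ) (hc : ρ.ρ w = c • LinearMap.id) (hc0 : c ≠ 0)
    (hnt : Nontrivial ρ)
    (i : FDRep.of (Representation.dual ρ.ρ) ≅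
      FDRep.of (MonoidHom.comp ρ.ρ σ.toMonoidHom)) : c⁻¹ = c := by
  have hinv : ρ.ρ w⁻¹ = c⁻¹ • LinearMap.id := by
    have h1 : ρ.ρ w ∘ₗ ρ.ρ w⁻¹ = LinearMap.id := by
      rw [← Module.End.mul_eq_comp, ← _root_.map_mul, mul_inv_cancel, _root_.map_one]; rfl
    rw [hc] at h1
    calc ρ.ρ w⁻¹ = (c⁻¹ * c) • ρ.ρ w⁻¹ := by rw [inv_mul_cancel₀ hc0, one_smul]
    _ = c⁻¹ • ((c • LinearMap.id) ∘ₗ ρ.ρ w⁻¹) := by rw [mul_smul]; ext v; simp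
    _ = c⁻¹ • LinearMap.id := by rw [h1]
  have hdual : (FDRep.of (Representation.dual ρ.ρ)).ρ w = c⁻¹ • LinearMap.id := by
    show (Representation.dual ρ.ρ) w = _
    rw [Representation.dual_apply, hinv]
    ext f v
    simp only [Module.Dual.transpose, LinearMap.flip_apply, LinearMap.llcomp_apply,
      LinearMap.smul_apply, LinearMap.id_apply, LinearMap.coe_comp, Function.comp_apply,
      _root_.map_smul, smul_eq_mul]
    rfl
  have hcomp : (FDRep.of (MonoidHom.comp ρ.ρ σ.toMonoidHom)).ρ w = c • LinearMap.id := by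
    show ρ.ρ (σ w) = _
    rw [hw, hc]
  have hconj := FDRep.Iso.conj_ρ i w
  rw [hdual, hcomp] at hconj
  have heq : (c • LinearMap.id : ρ →ₗ[ℂ] ρ) = c⁻¹ • LinearMap.id := by
    rw [LinearEquiv.conj_apply] at hconj
    rw [hconj]
    ext v
    simp
  obtain ⟨v, hv⟩ := exists_ne (0 : ρ)
  have h5 := congrArg (fun f => f v) heq
  simp only [LinearMap.smul_apply, LinearMap.id_apply] at h5
  exact (smul_cancel_of_ne_zero hv h5).symm

open CategoryTheory


/-- If `p` is an odd prime and `σ` an automorphism of the Heisenberg group `H_p` fixing the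
center pointwise, then no `p`-dimensional complex irreducible representation `ρ` of `H_p`
satisfies `ρ^∨ ≅ ρ ∘ σ`. -/
theorem heis_no_conjugate_selfdual_irrep (p : ℕ) [Fact p.Prime] (hp : Odd p)
    (σ : ↥(Heis p) ≃* ↥(Heis p)) (hσ : ∀ z ∈ Subgroup.center ↥(Heis p), σ z = z)
    (ρ : FDRep ℂ ↥(Heis p)) (hρ : Simple ρ) (hd : Module.finrank ℂ ρ = p) :
    IsEmpty (FDRep.of (Representation.dual ρ.ρ) ≅
      FDRep.of (MonoidHom.comp ρ.ρ σ.toMonoidHom))     := by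
  refine ⟨fun i => ?_⟩
  haveI : Simple ρ := hρ
  have hp2 : 2 ≤ p := (Fact.out : p.Prime).two_le
  haveI hnt : Nontrivial ρ := Module.nontrivial_of_finrank_pos (R := ℂ) (by rw [hd]; omega)
  obtain ⟨v0, hv0⟩ := exists_ne (0 : ρ)
  -- Step 1: central elements act trivially
  have hcen : ∀ t : ZMod p, ρ.ρ (heisElt p 0 0 t) = LinearMap.id := by
    intro t
    set w := heisElt p 0 0 t with hwdef
    have hwc := heisElt_central p t
    obtain ⟨c, hc⟩ := scalar_of_commute ρ (ρ.ρ w) (fun g => by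
      rw [← Module.End.mul_eq_comp, ← Module.End.mul_eq_comp, ← _root_.map_mul, ← _root_.map_mul,
        Subgroup.mem_center_iff.mp hwc g])
    have hc0 : c ≠ 0 := by
      intro h0
      have h1 : ρ.ρ w ∘ₗ ρ.ρ w⁻¹ = LinearMap.id := by
        rw [← Module.End.mul_eq_comp, ← _root_.map_mul, mul_inv_cancel, _root_.map_one]; rfl
      rw [hc, h0, zero_smul] at h1
      have := congrArg (fun f => f v0) h1
      simp at this
      exact hv0 this.symm
    have hcinv : c⁻¹ = c := central_inv_eq ρ σ w (hσ w hwc) c hc hc0 hnt i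
    have hc2 : c * c = 1 := by
      have := mul_inv_cancel₀ hc0
      rw [hcinv] at this
      exact this
    have hcp : c ^ p = 1 := by
      have hwp : w ^ p = 1 := by
        rw [hwdef, heisElt_pow, ZMod.natCast_self, zero_mul, heisElt_one]
      have h1 : (ρ.ρ w) ^ p = LinearMap.id := by
        rw [← _root_.map_pow, hwp, _root_.map_one]; rfl
      rw [hc, ← Module.End.one_eq_id, smul_pow, one_pow] at h1
      rw [Module.End.one_eq_id] at h1
      have := congrArg (fun f => f v0) h1
      simp only [LinearMap.smul_apply, Module.End.one_apply, LinearMap.id_apply] at this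
      exact smul_cancel_of_ne_zero hv0 (by simpa using this)
    have hc1 : c = 1 := by
      obtain ⟨k, hk⟩ := hp
      have : c ^ p = c := by
        rw [hk, pow_succ, pow_mul]
        rw [show c ^ 2 = 1 by rw [sq]; exact hc2, one_pow, one_mul]
      rw [hcp] at this
      exact this.symm
    rw [hc, hc1, one_smul]
  -- Step 2: all images commute
  have hcomm : ∀ x y : ↥(Heis p), ρ.ρ x ∘ₗ ρ.ρ y = ρ.ρ y ∘ₗ ρ.ρ x := by
    intro x y
    obtain ⟨t, ht⟩ := heis_comm p x y
    have h2 := congrArg ρ.ρ ht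
    rw [_root_.map_mul, _root_.map_mul, _root_.map_mul, hcen t] at h2
    rw [← Module.End.mul_eq_comp, ← Module.End.mul_eq_comp, h2]
    rfl
  -- Step 3: every ρ(g) is scalar
  have hscal : ∀ g : ↥(Heis p), ∃ c : ℂ, ρ.ρ g = c • LinearMap.id := by
    intro g
    exact scalar_of_commute ρ (ρ.ρ g) (fun h => by rw [hcomm h g])
  -- Step 4: contradiction with dimension p ≥ 2
  let b : Module.Basis (Fin p) ℂ ρ := Module.finBasisOfFinrankEq ℂ ρ hd
  set i0 : Fin p := ⟨0, by omega⟩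
  set i1 : Fin p := ⟨1, by omega⟩
  let f : ρ →ₗ[ℂ] ρ := b.constr ℂ (fun j => if j = i0 then b i0 else 0)
  obtain ⟨d, hdd⟩ := scalar_of_commute ρ f (fun g => by
    obtain ⟨c, hc⟩ := hscal g
    rw [hc]; ext v; simp [smul_comm c])
  have h0 : f (b i0) = b i0 := by simp [f, Module.Basis.constr_basis]
  have h1 : f (b i1) = 0 := by
    have : i1 ≠ i0 := by simp [i0, i1, Fin.ext_iff]
    simp [f, Module.Basis.constr_basis, this]
  rw [hdd] at h0 h1
  simp only [LinearMap.smul_apply, LinearMap.id_apply] at h0 h1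
  have hd1 : d = 1 := smul_cancel_of_ne_zero (b.ne_zero i0) (by rw [h0, one_smul])
  rw [hd1, one_smul] at h1
  exact b.ne_zero i1 h1
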